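/- arXiv:2312.13678 — 2 statements merged into one kernel-verified Lean document; each statement's English description precedes it below -/
import Mathlib

section
/- Let u, v ∈ H¹₀(U) ∩ H¹(U) on a bounded open set U, with w = u − v satisfying, weakly, Δw = χ_{A∩{u>0}} − χ_{B∩{v>0}} where u, v ≥ 0. Then for every λ > 0, ∫_U |∇w₊|² λ²/(λ² + w²)^{3/2} dx + ∫_U (χ_{A∩{u>0}} − χ_{B∩{v>0}}) w₊/(λ² + w²)^{1/2} dx = 0, and consequently ∫_U (χ_{A∩{u>0}} − χ_{B∩{v>0}}) χ_{{u>v}} dx ≤ 0. -/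
open MeasureTheory Set Metric
open scoped RealInnerProductSpace

open intervalIntegral Filter

noncomputable def Gfun (l t : ℝ) : ℝ := t / Real.sqrt (l^2 + t^2)
noncomputable def Gd (l t : ℝ) : ℝ := l^2 / ((l^2 + t^2) ^ ((3:ℝ)/2))
noncomputable def th (n : ℕ) (s : ℝ) : ℝ := max 0 (min 1 (n * s))
noncomputable def gn (l : ℝ) (n : ℕ) (t : ℝ) : ℝ := ∫ s in (0:ℝ)..t, Gd l s * th n s

lemma sq_add_pos {l t : ℝ} (hl : 0 < l) : 0 < l^2 + t^2 := by positivity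

lemma rpow32 {l t : ℝ} (hl : 0 < l) :
    (l^2 + t^2) ^ ((3:ℝ)/2) = (l^2 + t^2) * Real.sqrt (l^2 + t^2) := by
  have hS : 0 < l^2 + t^2 := sq_add_pos hl
  rw [Real.sqrt_eq_rpow, show (3:ℝ)/2 = 1 + 1/2 by norm_num, Real.rpow_add hS,
    Real.rpow_one]

lemma Gfun_hasDeriv {l : ℝ} (hl : 0 < l) (t : ℝ) : HasDerivAt (Gfun l) (Gd l t) t := by
  have hS : 0 < l^2 + t^2 := sq_add_pos hl
  have hs : 0 < Real.sqrt (l^2 + t^2) := Real.sqrt_pos.2 hS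
  have h1 : HasDerivAt (fun t : ℝ => l^2 + t^2) (2*t) t := by
    simpa using ((hasDerivAt_pow 2 t).const_add (l^2))
  have h2 : HasDerivAt (fun t : ℝ => Real.sqrt (l^2 + t^2))
      (2*t / (2 * Real.sqrt (l^2 + t^2))) t := by
    have := (Real.hasDerivAt_sqrt hS.ne').comp t h1
    simpa [Function.comp_def, div_eq_mul_inv, mul_comm, mul_assoc, mul_left_comm] using this
  have h3 := (hasDerivAt_id t).div h2 hs.ne'
  refine (show HasDerivAt (Gfun l) _ t from h3).congr_deriv ?_
  symm
  rw [Gd, rpow32 hl]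
  set s := Real.sqrt (l^2 + t^2) with hsdef
  have hS' : l^2 + t^2 = s^2 := (Real.sq_sqrt hS.le).symm
  rw [hS']
  simp only [id]
  field_simp
  linear_combination hS'

lemma Gd_cont {l : ℝ} (hl : 0 < l) : Continuous (Gd l) := by
  apply continuous_const.div
  · exact (continuous_const.add (continuous_pow 2)).rpow_const
      (fun x => Or.inl (sq_add_pos hl).ne')
  · exact fun x => (Real.rpow_pos_of_pos (sq_add_pos hl) _).ne'

lemma Gd_nonneg {l : ℝ} (hl : 0 < l) (s : ℝ) : 0 ≤ Gd l s :=
  div_nonneg (sq_nonneg l) (Real.rpow_pos_of_pos (sq_add_pos hl) _).le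

lemma Gd_le {l : ℝ} (hl : 0 < l) (s : ℝ) : Gd l s ≤ 1 / l := by
  rw [Gd, rpow32 hl, div_le_div_iff₀ (by positivity) hl]
  have h1 : l ≤ Real.sqrt (l^2 + s^2) := by
    have h1 := Real.sqrt_le_sqrt (show l^2 ≤ l^2+s^2 by nlinarith)
    rwa [Real.sqrt_sq hl.le] at h1
  nlinarith [sq_nonneg s, Real.sqrt_nonneg (l^2+s^2)]

lemma th_cont (n : ℕ) : Continuous (th n) :=
  continuous_const.max (continuous_const.min (continuous_const.mul continuous_id))

lemma th_nonneg (n : ℕ) (s : ℝ) : 0 ≤ th n s := le_max_left _ _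

lemma th_le_one (n : ℕ) (s : ℝ) : th n s ≤ 1 :=
  max_le zero_le_one (min_le_left _ _)

lemma th_eq_zero (n : ℕ) {s : ℝ} (hs : s ≤ 0) : th n s = 0 :=
  max_eq_left ((min_le_right _ _).trans (mul_nonpos_of_nonneg_of_nonpos (n.cast_nonneg) hs))

lemma th_eq_one {n : ℕ} {s : ℝ} (h : 1 ≤ (n:ℝ) * s) : th n s = 1 := by
  rw [th, min_eq_left h, max_eq_right zero_le_one]

lemma th_mono {n m : ℕ} (hnm : n ≤ m) (s : ℝ) : th n s ≤ th m s := by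
  rcases le_or_gt s 0 with hs | hs
  · rw [th_eq_zero n hs, th_eq_zero m hs]
  · exact max_le_max le_rfl (min_le_min le_rfl
      (mul_le_mul_of_nonneg_right (by exact_mod_cast hnm) hs.le))

lemma th_tendsto {s : ℝ} (hs : 0 < s) :
    Filter.Tendsto (fun n : ℕ => th n s) Filter.atTop (nhds 1) := by
  apply Filter.Tendsto.congr' _ tendsto_const_nhds
  filter_upwards [Filter.eventually_ge_atTop (⌈1/s⌉₊)] with n hn
  refine (th_eq_one ?_).symm
  have h1 : 1/s ≤ (n:ℝ) := le_trans (Nat.le_ceil _) (by exact_mod_cast hn)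
  rw [div_le_iff₀ hs] at h1
  linarith

lemma f_cont {l : ℝ} (hl : 0 < l) (n : ℕ) : Continuous (fun s => Gd l s * th n s) :=
  (Gd_cont hl).mul (th_cont n)

lemma gn_hasDeriv {l : ℝ} (hl : 0 < l) (n : ℕ) (t : ℝ) :
    HasDerivAt (gn l n) (Gd l t * th n t) t := by
  apply intervalIntegral.integral_hasDerivAt_right
    ((f_cont hl n).intervalIntegrable _ _)
    ((f_cont hl n).stronglyMeasurableAtFilter _ _)
    (f_cont hl n).continuousAt

lemma integral_Gd {l : ℝ} (hl : 0 < l) (a b : ℝ) :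
    ∫ s in a..b, Gd l s = Gfun l b - Gfun l a :=
  intervalIntegral.integral_eq_sub_of_hasDerivAt (fun x _ => Gfun_hasDeriv hl x)
    ((Gd_cont hl).intervalIntegrable _ _)

lemma Gfun_zero (l : ℝ) : Gfun l 0 = 0 := by simp [Gfun]

lemma Gfun_nonneg {l t : ℝ} (hl : 0 < l) (ht : 0 ≤ t) : 0 ≤ Gfun l t :=
  div_nonneg ht (Real.sqrt_nonneg _)

lemma Gfun_le_one {l t : ℝ} (hl : 0 < l) : Gfun l t ≤ 1 := by
  rw [Gfun, div_le_one (Real.sqrt_pos.2 (sq_add_pos hl))]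
  calc t ≤ |t| := le_abs_self t
  _ = Real.sqrt (t^2) := (Real.sqrt_sq_eq_abs t).symm
  _ ≤ Real.sqrt (l^2 + t^2) := Real.sqrt_le_sqrt (by nlinarith)

lemma sqrt_ge {l : ℝ} (hl : 0 < l) (s : ℝ) : l ≤ Real.sqrt (l^2 + s^2) := by
  have h1 := Real.sqrt_le_sqrt (show l^2 ≤ l^2+s^2 by nlinarith)
  rwa [Real.sqrt_sq hl.le] at h1

lemma Gfun_le {l t : ℝ} (hl : 0 < l) (ht : 0 ≤ t) : Gfun l t ≤ t / l :=
  div_le_div_of_nonneg_left ht (by positivity) (sqrt_ge hl t)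

lemma gn_zero_of_nonpos {l : ℝ} (n : ℕ) {t : ℝ} (ht : t ≤ 0) : gn l n t = 0 := by
  rw [gn]
  rw [intervalIntegral.integral_congr (g := fun _ => (0:ℝ))
    (fun s hs => by
      rw [Set.uIcc_of_ge ht] at hs
      rw [th_eq_zero n hs.2, mul_zero])]
  simp

lemma gn_nonneg {l : ℝ} (hl : 0 < l) (n : ℕ) (t : ℝ) : 0 ≤ gn l n t := by
  rcases le_or_gt t 0 with ht | ht
  · rw [gn_zero_of_nonpos n ht]
  · exact intervalIntegral.integral_nonneg ht.le
      (fun s _ => mul_nonneg (Gd_nonneg hl s) (th_nonneg n s))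

lemma gn_le_Gfun {l : ℝ} (hl : 0 < l) (n : ℕ) {t : ℝ} (ht : 0 ≤ t) :
    gn l n t ≤ Gfun l t := by
  have h := intervalIntegral.integral_mono_on (μ := volume)
    (f := fun s => Gd l s * th n s) (g := Gd l) ht
    ((f_cont hl n).intervalIntegrable _ _) ((Gd_cont hl).intervalIntegrable _ _)
    (fun s _ => by
      show Gd l s * th n s ≤ Gd l s
      nlinarith [Gd_nonneg hl s, th_le_one n s, th_nonneg n s])
  calc gn l n t ≤ ∫ s in (0:ℝ)..t, Gd l s := h
  _ = Gfun l t := by rw [integral_Gd hl, Gfun_zero, sub_zero]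

lemma gn_le_one {l : ℝ} (hl : 0 < l) (n : ℕ) (t : ℝ) : gn l n t ≤ 1 := by
  rcases le_or_gt t 0 with ht | ht
  · rw [gn_zero_of_nonpos n ht]; norm_num
  · exact (gn_le_Gfun hl n ht.le).trans (Gfun_le_one hl)

lemma gn_approx {l : ℝ} (hl : 0 < l) {n : ℕ} (hn : 1 ≤ n) (t : ℝ) :
    |gn l n t - max t 0 / Real.sqrt (l^2 + t^2)| ≤ 1/(n*l) := by
  have hn' : (0:ℝ) < n := by exact_mod_cast hn
  have hpos : (0:ℝ) < 1/(n*l) := by positivity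
  have hfl : Gfun l (1/n) ≤ 1/(n*l) := by
    calc Gfun l (1/n) ≤ (1/n)/l := Gfun_le hl (by positivity)
    _ = 1/(n*l) := by rw [div_div]
  rcases le_or_gt t 0 with ht | ht
  · rw [gn_zero_of_nonpos n ht, max_eq_right ht]
    simpa using hpos.le
  · rw [max_eq_left ht.le]
    have hG : t / Real.sqrt (l^2 + t^2) = Gfun l t := rfl
    rw [hG]
    rcases le_or_gt t (1/n) with htn | htn
    · have h1 := gn_nonneg hl n t
      have h2 := gn_le_Gfun hl n ht.le
      have h3 : Gfun l t ≤ 1/(n*l) := by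
        calc Gfun l t ≤ t/l := Gfun_le hl ht.le
        _ ≤ (1/n)/l := by gcongr
        _ = 1/(n*l) := by rw [div_div]
      rw [abs_le]
      constructor <;> linarith
    · have hint : ∀ a b : ℝ, IntervalIntegrable (fun s => Gd l s * th n s) volume a b :=
        fun a b => (f_cont hl n).intervalIntegrable a b
      have hsplit := intervalIntegral.integral_add_adjacent_intervals
        (a := (0:ℝ)) (b := 1/n) (c := t) (hint 0 (1/n)) (hint (1/n) t)
      have h2 : (∫ s in (1/(n:ℝ))..t, Gd l s * th n s) = ∫ s in (1/(n:ℝ))..t, Gd l s := by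
        apply intervalIntegral.integral_congr
        intro s hs
        rw [Set.uIcc_of_le htn.le] at hs
        have h1ns : 1 ≤ (n:ℝ) * s := by
          have := hs.1
          rw [div_le_iff₀ hn'] at this
          linarith [this]
        simp [th_eq_one h1ns]
      rw [h2, integral_Gd hl] at hsplit
      have hgn : gn l n t = gn l n (1/n) + (Gfun l t - Gfun l (1/n)) := by
        rw [gn, ← hsplit]; rfl
      have h1 := gn_nonneg hl n (1/n)
      have h2' := gn_le_Gfun hl n (show (0:ℝ) ≤ 1/n by positivity)
      rw [abs_le]
      constructor <;> [skip; skip] <;> rw [hgn] <;> linarith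

open scoped RealInnerProductSpace

lemma gradient_comp_hasGradient {E : Type*} [NormedAddCommGroup E] [InnerProductSpace ℝ E]
    [CompleteSpace E] {w : E → ℝ} {g : ℝ → ℝ} {x : E} {d : ℝ}
    (hw : DifferentiableAt ℝ w x) (hg : HasDerivAt g d (w x)) :
    HasGradientAt (fun y => g (w y)) (d • gradient w x) x := by
  have h1 : HasFDerivAt w (InnerProductSpace.toDual ℝ E (gradient w x)) x :=
    hw.hasGradientAt.hasFDerivAt
  have h2 := (hg.hasFDerivAt).comp x h1
  rw [hasGradientAt_iff_hasFDerivAt]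
  refine HasFDerivAt.congr_fderiv h2 ?_
  apply ContinuousLinearMap.ext
  intro y
  simp [InnerProductSpace.toDual_apply_apply, real_inner_smul_left, mul_comm]

lemma gradient_comp_eq {E : Type*} [NormedAddCommGroup E] [InnerProductSpace ℝ E]
    [CompleteSpace E] {w : E → ℝ} {g : ℝ → ℝ} {x : E} {d : ℝ}
    (hw : DifferentiableAt ℝ w x) (hg : HasDerivAt g d (w x)) :
    gradient (fun y => g (w y)) x = d • gradient w x :=
  (gradient_comp_hasGradient hw hg).gradient

lemma gmax_nonneg {l : ℝ} (t : ℝ) : 0 ≤ max t 0 / Real.sqrt (l^2+t^2) :=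
  div_nonneg (le_max_right t 0) (Real.sqrt_nonneg _)

lemma gmax_le_one {l : ℝ} (hl : 0 < l) (t : ℝ) : max t 0 / Real.sqrt (l^2+t^2) ≤ 1 := by
  rw [div_le_one (Real.sqrt_pos.2 (sq_add_pos hl))]
  rcases le_or_gt t 0 with ht | ht
  · rw [max_eq_right ht]; exact Real.sqrt_nonneg _
  · rw [max_eq_left ht.le]
    calc t ≤ |t| := le_abs_self t
    _ = Real.sqrt (t^2) := (Real.sqrt_sq_eq_abs t).symm
    _ ≤ Real.sqrt (l^2 + t^2) := Real.sqrt_le_sqrt (by nlinarith)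

lemma gmax_cont {l : ℝ} (hl : 0 < l) :
    Continuous (fun t => max t 0 / Real.sqrt (l^2+t^2)) := by
  apply Continuous.div (continuous_id.max continuous_const)
    (Real.continuous_sqrt.comp (continuous_const.add (continuous_pow 2)))
  exact fun t => (Real.sqrt_pos.2 (sq_add_pos hl)).ne'

lemma gmax_tendsto {t : ℝ} (ht : 0 < t) {L : ℕ → ℝ} (hL : Filter.Tendsto L Filter.atTop (nhds 0)) :
    Filter.Tendsto (fun n => max t 0 / Real.sqrt ((L n)^2 + t^2)) Filter.atTop (nhds 1) := by
  have hden : Real.sqrt ((0:ℝ)^2 + t^2) ≠ 0 := by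
    rw [show (0:ℝ)^2 + t^2 = t^2 by ring, Real.sqrt_sq ht.le]; exact ht.ne'
  have hcont : ContinuousAt (fun l : ℝ => max t 0 / Real.sqrt (l^2 + t^2)) 0 := by
    have hc2 : Continuous (fun l : ℝ => Real.sqrt (l^2 + t^2)) :=
      Real.continuous_sqrt.comp ((continuous_pow 2).add continuous_const)
    exact ContinuousAt.div continuousAt_const hc2.continuousAt hden
  have h2 := (hcont.tendsto).comp hL
  have h3 : max t 0 / Real.sqrt ((0:ℝ)^2 + t^2) = 1 := by
    rw [show (0:ℝ)^2 + t^2 = t^2 by ring, Real.sqrt_sq ht.le, max_eq_left ht.le, div_self ht.ne']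
  rw [h3] at h2
  exact h2


open Metric Filter

/-- Testing the equation for `w = u − v` with `w₊/(λ² + w²)^{1/2}` yields an
integral identity for each `λ > 0`, and in the limit `λ → 0` the inequality
`∫ (χ_{A∩{u>0}} − χ_{B∩{v>0}}) χ_{{u>v}} ≤ 0`. -/
theorem stmt8 {N : ℕ} (U A B : Set (EuclideanSpace ℝ (Fin N)))
    (hU : IsOpen U) (hUb : Bornology.IsBounded U)
    (hAm : MeasurableSet A) (hBm : MeasurableSet B)
    (u v : EuclideanSpace ℝ (Fin N) → ℝ)
    (hud : Differentiable ℝ u) (hvd : Differentiable ℝ v)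
    (hu0 : ∀ x, 0 ≤ u x) (hv0 : ∀ x, 0 ≤ v x)
    -- `u − v ∈ H¹₀(U)`
    (hbd : ∀ x, x ∉ U → u x = v x)
    -- weak formulation of `Δ(u−v) = χ_{A∩{u>0}} − χ_{B∩{v>0}}`, for test
    -- functions vanishing outside `U` (the class of `H¹₀(U)` functions)
    (hweak : ∀ φ : EuclideanSpace ℝ (Fin N) → ℝ, (∀ x, x ∉ U → φ x = 0) →
      Differentiable ℝ φ →
      (∫ x in U, ⟪gradient (fun y => u y - v y) x, gradient φ x⟫) +
        ∫ x in U, (indicator (A ∩ {x | 0 < u x}) (fun _ => (1:ℝ)) x -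
          indicator (B ∩ {x | 0 < v x}) (fun _ => (1:ℝ)) x) * φ x = 0) :
    (∀ l : ℝ, 0 < l →
      (∫ x in U ∩ {x | 0 < u x - v x},
          ‖gradient (fun y => u y - v y) x‖ ^ 2 *
            (l ^ 2 / ((l ^ 2 + (u x - v x) ^ 2) ^ ((3:ℝ)/2)))) +
        ∫ x in U, (indicator (A ∩ {x | 0 < u x}) (fun _ => (1:ℝ)) x -
            indicator (B ∩ {x | 0 < v x}) (fun _ => (1:ℝ)) x) *
          (max (u x - v x) 0 / Real.sqrt (l ^ 2 + (u x - v x) ^ 2)) = 0) ∧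
    (∫ x in U, (indicator (A ∩ {x | 0 < u x}) (fun _ => (1:ℝ)) x -
        indicator (B ∩ {x | 0 < v x}) (fun _ => (1:ℝ)) x) *
      indicator {x | v x < u x} (fun _ => (1:ℝ)) x) ≤ 0 := by
  -- basic objects
  set w : EuclideanSpace ℝ (Fin N) → ℝ := fun y => u y - v y with hwdef
  have hwd : Differentiable ℝ w := hud.sub hvd
  have hwc : Continuous w := hwd.continuous
  set c : EuclideanSpace ℝ (Fin N) → ℝ := fun x =>
    indicator (A ∩ {x | 0 < u x}) (fun _ => (1:ℝ)) x -
      indicator (B ∩ {x | 0 < v x}) (fun _ => (1:ℝ)) x with hcdef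
  have hcm : Measurable c := by
    apply Measurable.sub
    · exact measurable_const.indicator (hAm.inter
        ((isOpen_lt continuous_const hud.continuous).measurableSet))
    · exact measurable_const.indicator (hBm.inter
        ((isOpen_lt continuous_const hvd.continuous).measurableSet))
  have hc1 : ∀ x, |c x| ≤ 1 := by
    intro x
    rw [hcdef]
    simp only [indicator]
    split_ifs <;> norm_num
  haveI hfin : IsFiniteMeasure (volume.restrict U) :=
    ⟨by rw [Measure.restrict_apply_univ]; exact hUb.measure_lt_top⟩
  have hSmeas : MeasurableSet {x | 0 < w x} :=
    (isOpen_lt continuous_const hwc).measurableSet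
  have hgradm : Measurable (fun x => gradient w x) := by
    have h1 : Measurable (fun x => fderiv ℝ w x) := measurable_fderiv ℝ w
    exact ((InnerProductSpace.toDual ℝ _).symm.continuous.measurable).comp h1
  have hnormm : Measurable (fun x => ‖gradient w x‖^2) :=
    (continuous_norm.measurable.comp hgradm).pow_const 2
  have hw0 : ∀ x, x ∉ U → w x = 0 := fun x hx => sub_eq_zero_of_eq (hbd x hx)
  -- the key identity, for every l > 0
  have key : ∀ l : ℝ, 0 < l →
      (∫ x in U ∩ {x | 0 < u x - v x},
          ‖gradient (fun y => u y - v y) x‖ ^ 2 *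
            (l ^ 2 / ((l ^ 2 + (u x - v x) ^ 2) ^ ((3:ℝ)/2)))) +
        ∫ x in U, (indicator (A ∩ {x | 0 < u x}) (fun _ => (1:ℝ)) x -
            indicator (B ∩ {x | 0 < v x}) (fun _ => (1:ℝ)) x) *
          (max (u x - v x) 0 / Real.sqrt (l ^ 2 + (u x - v x) ^ 2)) = 0 := by
    intro l hl
    -- abbreviations
    show (∫ x in U ∩ {x | 0 < w x}, ‖gradient w x‖ ^ 2 * Gd l (w x)) +
      ∫ x in U, c x * (max (w x) 0 / Real.sqrt (l^2 + (w x)^2)) = 0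
    have hgnd : ∀ n : ℕ, Differentiable ℝ (gn l n) :=
      fun n t => (gn_hasDeriv hl n t).differentiableAt
    have hφd : ∀ n : ℕ, Differentiable ℝ (fun x => gn l n (w x)) :=
      fun n => (hgnd n).comp hwd
    have hφ0 : ∀ n : ℕ, ∀ x, x ∉ U → gn l n (w x) = 0 :=
      fun n x hx => by rw [hw0 x hx]; exact gn_zero_of_nonpos n le_rfl
    have hinner : ∀ (n : ℕ) x,
        ⟪gradient w x, gradient (fun y => gn l n (w y)) x⟫
          = ‖gradient w x‖^2 * (Gd l (w x) * th n (w x)) := by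
      intro n x
      rw [gradient_comp_eq (hwd x) (gn_hasDeriv hl n (w x)), real_inner_smul_right,
        real_inner_self_eq_norm_sq]
      ring
    set hn : ℕ → EuclideanSpace ℝ (Fin N) → ℝ :=
      fun n x => ‖gradient w x‖^2 * (Gd l (w x) * th n (w x)) with hhn
    set h : EuclideanSpace ℝ (Fin N) → ℝ :=
      ({y | 0 < w y}).indicator (fun x => ‖gradient w x‖^2 * Gd l (w x)) with hh
    have hhnm : ∀ n, Measurable (hn n) := fun n =>
      hnormm.mul ((((Gd_cont hl).comp hwc).measurable).mul
        (((th_cont n).comp hwc).measurable))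
    have hhm : Measurable h :=
      (hnormm.mul ((Gd_cont hl).comp hwc).measurable).indicator hSmeas
    have hn_nonneg : ∀ n x, 0 ≤ hn n x := fun n x =>
      mul_nonneg (by positivity) (mul_nonneg (Gd_nonneg hl _) (th_nonneg n _))
    have h_nonneg : ∀ x, 0 ≤ h x := fun x =>
      indicator_nonneg (fun y _ => mul_nonneg (by positivity) (Gd_nonneg hl _)) x
    have hn_mono : ∀ x, Monotone (fun n => hn n x) := by
      intro x n m hnm
      have h0 := th_mono hnm (w x)
      have h1 := Gd_nonneg hl (w x)
      have h2 : (0:ℝ) ≤ ‖gradient w x‖^2 := by positivity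
      exact mul_le_mul_of_nonneg_left (mul_le_mul_of_nonneg_left h0 h1) h2
    have hn_le_h : ∀ n x, hn n x ≤ h x := by
      intro n x
      rcases lt_or_ge 0 (w x) with hx | hx
      · rw [hh, indicator_of_mem (show x ∈ {y | 0 < w y} from hx)]
        have h0 := th_le_one n (w x)
        have h1 := Gd_nonneg hl (w x)
        have h2 : (0:ℝ) ≤ ‖gradient w x‖^2 := by positivity
        calc ‖gradient w x‖^2 * (Gd l (w x) * th n (w x))
            ≤ ‖gradient w x‖^2 * (Gd l (w x) * 1) :=
          mul_le_mul_of_nonneg_left (mul_le_mul_of_nonneg_left h0 h1) h2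
        _ = ‖gradient w x‖^2 * Gd l (w x) := by ring
      · have hz : hn n x = 0 := by rw [hhn]; simp [th_eq_zero n hx]
        rw [hz, hh, indicator_of_notMem (by simpa using not_lt.2 hx)]
    have hn_tendsto : ∀ x, Filter.Tendsto (fun n => hn n x) Filter.atTop (nhds (h x)) := by
      intro x
      rcases lt_or_ge 0 (w x) with hx | hx
      · have hth := th_tendsto hx
        have h2 : Filter.Tendsto (fun n => ‖gradient w x‖^2 * (Gd l (w x) * th n (w x)))
            Filter.atTop (nhds (‖gradient w x‖^2 * (Gd l (w x) * 1))) :=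
          tendsto_const_nhds.mul (tendsto_const_nhds.mul hth)
        rw [hh, indicator_of_mem (show x ∈ {y | 0 < w y} from hx)]
        simpa [mul_one] using h2
      · have hz : (fun n => hn n x) = fun _ => (0:ℝ) := by
          funext n; rw [hhn]; simp [th_eq_zero n hx]
        rw [hz, hh, indicator_of_notMem (by simpa using not_lt.2 hx)]
        exact tendsto_const_nhds
    -- the lower order terms
    set Jn : ℕ → ℝ := fun n => ∫ x in U, c x * gn l n (w x) with hJn
    set Jl : ℝ := ∫ x in U, c x * (max (w x) 0 / Real.sqrt (l^2 + (w x)^2)) with hJl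
    have hJn_int : ∀ n, Integrable (fun x => c x * gn l n (w x)) (volume.restrict U) := by
      intro n
      refine Integrable.mono' (integrable_const 1)
        ((hcm.mul (((hgnd n).continuous.comp hwc).measurable)).aestronglyMeasurable)
        (Filter.Eventually.of_forall fun x => ?_)
      rw [Real.norm_eq_abs, abs_mul]
      have h1 := hc1 x
      have h2 : |gn l n (w x)| ≤ 1 :=
        abs_le.2 ⟨by linarith [gn_nonneg hl n (w x)], gn_le_one hl n (w x)⟩
      have h3 := abs_nonneg (c x)
      have h4 := abs_nonneg (gn l n (w x))
      nlinarith
    have hJl_int : Integrable (fun x => c x * (max (w x) 0 / Real.sqrt (l^2 + (w x)^2)))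
        (volume.restrict U) := by
      refine Integrable.mono' (integrable_const 1)
        ((hcm.mul (((gmax_cont hl).comp hwc).measurable)).aestronglyMeasurable)
        (Filter.Eventually.of_forall fun x => ?_)
      rw [Real.norm_eq_abs, abs_mul]
      have h1 := hc1 x
      have h2 : |max (w x) 0 / Real.sqrt (l^2 + (w x)^2)| ≤ 1 :=
        abs_le.2 ⟨by linarith [gmax_nonneg (l := l) (w x)], gmax_le_one hl (w x)⟩
      have h3 := abs_nonneg (c x)
      have h4 := abs_nonneg (max (w x) 0 / Real.sqrt (l^2 + (w x)^2))
      nlinarith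
    have hweakn : ∀ n : ℕ, (∫ x in U, hn n x) + Jn n = 0 := by
      intro n
      have h0 := hweak (fun y => gn l n (w y)) (hφ0 n) (hφd n)
      have h2 : (∫ x in U, ⟪gradient w x, gradient (fun y => gn l n (w y)) x⟫)
          = ∫ x in U, hn n x :=
        integral_congr_ae (Filter.Eventually.of_forall fun x => hinner n x)
      rw [h2] at h0
      exact h0
    have hJtend : Filter.Tendsto Jn Filter.atTop (nhds Jl) := by
      rw [← tendsto_sub_nhds_zero_iff]
      have hM : ∀ n : ℕ, 1 ≤ n → ‖Jn n - Jl‖ ≤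
          1/((n:ℝ)*l) * (volume.restrict U univ).toReal := by
        intro n hn1
        rw [hJn, hJl, ← integral_sub (hJn_int n) hJl_int]
        apply MeasureTheory.norm_integral_le_of_norm_le_const
        refine Filter.Eventually.of_forall fun x => ?_
        have h1 : c x * gn l n (w x) - c x * (max (w x) 0 / Real.sqrt (l^2 + (w x)^2))
            = c x * (gn l n (w x) - max (w x) 0 / Real.sqrt (l^2 + (w x)^2)) := by ring
        rw [h1, Real.norm_eq_abs, abs_mul]
        have h2 := gn_approx hl hn1 (w x)
        have h3 := hc1 x
        have h4 := abs_nonneg (c x)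
        have h5 := abs_nonneg (gn l n (w x) - max (w x) 0 / Real.sqrt (l^2 + (w x)^2))
        nlinarith
      have hb : Filter.Tendsto (fun n : ℕ => 1/((n:ℝ)*l) * (volume.restrict U univ).toReal)
          Filter.atTop (nhds 0) := by
        have h1 := tendsto_one_div_atTop_nhds_zero_nat (𝕜 := ℝ)
        have h2 := h1.mul_const ((1/l) * (volume.restrict U univ).toReal)
        rw [zero_mul] at h2
        convert h2 using 2 with n
        ring
      apply squeeze_zero_norm' _ hb
      filter_upwards [Filter.eventually_ge_atTop 1] with n hn1
      exact hM n hn1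
    by_cases hintall : ∀ n, Integrable (hn n) (volume.restrict U)
    · -- integrable case
      have hIn_eq : ∀ n, (∫ x in U, hn n x) = - Jn n := fun n => by linarith [hweakn n]
      have hmct := lintegral_tendsto_of_tendsto_of_monotone
        (f := fun n x => ENNReal.ofReal (hn n x)) (F := fun x => ENNReal.ofReal (h x))
        (μ := volume.restrict U)
        (fun n => ((hhnm n).ennreal_ofReal).aemeasurable)
        (Filter.Eventually.of_forall fun x a b hab =>
          ENNReal.ofReal_le_ofReal (hn_mono x hab))
        (Filter.Eventually.of_forall fun x =>
          (ENNReal.continuous_ofReal.tendsto _).comp (hn_tendsto x))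
      have hofReal : ∀ n, (∫⁻ x in U, ENNReal.ofReal (hn n x))
          = ENNReal.ofReal (∫ x in U, hn n x) := fun n =>
        (ofReal_integral_eq_lintegral_ofReal (hintall n)
          (Filter.Eventually.of_forall (hn_nonneg n))).symm
      have hJnlim : Filter.Tendsto (fun n => - Jn n) Filter.atTop (nhds (- Jl)) := hJtend.neg
      have hlim2 : Filter.Tendsto (fun n => ∫⁻ x in U, ENNReal.ofReal (hn n x))
          Filter.atTop (nhds (ENNReal.ofReal (- Jl))) := by
        simp_rw [hofReal, hIn_eq]
        exact (ENNReal.continuous_ofReal.tendsto _).comp hJnlim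
      have hHlint : (∫⁻ x in U, ENNReal.ofReal (h x)) = ENNReal.ofReal (- Jl) :=
        tendsto_nhds_unique hmct hlim2
      have hJl_nonneg : 0 ≤ - Jl := by
        apply ge_of_tendsto hJnlim
        refine Filter.Eventually.of_forall fun n => ?_
        rw [← hIn_eq n]
        exact integral_nonneg (hn_nonneg n)
      have hT2 : (∫ x in U, h x) = - Jl := by
        rw [integral_eq_lintegral_of_nonneg_ae (Filter.Eventually.of_forall h_nonneg)
          hhm.aestronglyMeasurable, hHlint, ENNReal.toReal_ofReal hJl_nonneg]
      have hT : (∫ x in U ∩ {x | 0 < w x}, ‖gradient w x‖ ^ 2 * Gd l (w x))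
          = ∫ x in U, h x := by
        rw [hh, MeasureTheory.integral_indicator hSmeas, Measure.restrict_restrict hSmeas, inter_comm]
      rw [hT, hT2]
      ring
    · -- non-integrable case
      push_neg at hintall
      obtain ⟨n0, hn0⟩ := hintall
      have hnint : ∀ n, n0 ≤ n → ¬ Integrable (hn n) (volume.restrict U) := by
        intro n hnn hcon
        exact hn0 (hcon.mono' (hhnm n0).aestronglyMeasurable
          (Filter.Eventually.of_forall fun x => by
            rw [Real.norm_eq_abs, abs_of_nonneg (hn_nonneg n0 x)]
            exact hn_mono x hnn))
      have hJzero : ∀ n, n0 ≤ n → Jn n = 0 := by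
        intro n hnn
        have h1 := hweakn n
        rw [integral_undef (hnint n hnn)] at h1
        linarith
      have hJl0 : Jl = 0 := by
        refine tendsto_nhds_unique hJtend (tendsto_const_nhds.congr' ?_)
        filter_upwards [Filter.eventually_ge_atTop n0] with n hnn
        exact (hJzero n hnn).symm
      have hhni : ¬ Integrable h (volume.restrict U) := fun hcon =>
        hnint n0 le_rfl (hcon.mono' (hhnm n0).aestronglyMeasurable
          (Filter.Eventually.of_forall fun x => by
            rw [Real.norm_eq_abs, abs_of_nonneg (hn_nonneg n0 x)]
            exact hn_le_h n0 x))
      have hTi : ¬ Integrable (fun x => ‖gradient w x‖ ^ 2 * Gd l (w x))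
          (volume.restrict (U ∩ {x | 0 < w x})) := by
        intro hcon
        apply hhni
        rw [hh, integrable_indicator_iff hSmeas]
        unfold IntegrableOn
        rw [Measure.restrict_restrict hSmeas, inter_comm]
        exact hcon
      rw [integral_undef hTi, hJl0]
      ring
  refine ⟨key, ?_⟩
  show (∫ x in U, c x * indicator {x | v x < u x} (fun _ => (1:ℝ)) x) ≤ 0
  set L : ℕ → ℝ := fun n => 1/((n:ℝ)+1) with hLdef
  have hLpos : ∀ n, 0 < L n := fun n => by positivity
  have hL0 : Filter.Tendsto L Filter.atTop (nhds 0) := tendsto_one_div_add_atTop_nhds_zero_nat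
  have hJneg : ∀ n : ℕ,
      (∫ x in U, c x * (max (w x) 0 / Real.sqrt ((L n)^2 + (w x)^2))) ≤ 0 := by
    intro n
    have hk := key (L n) (hLpos n)
    have hT_nonneg : 0 ≤ ∫ x in U ∩ {x | 0 < u x - v x},
        ‖gradient (fun y => u y - v y) x‖ ^ 2 *
          ((L n) ^ 2 / (((L n) ^ 2 + (u x - v x) ^ 2) ^ ((3:ℝ)/2))) := by
      apply MeasureTheory.integral_nonneg
      intro x
      have h1 : (0:ℝ) < ((L n)^2 + (u x - v x)^2) ^ ((3:ℝ)/2) :=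
        Real.rpow_pos_of_pos (sq_add_pos (hLpos n)) _
      positivity
    have hEq : (∫ x in U, c x * (max (w x) 0 / Real.sqrt ((L n)^2 + (w x)^2)))
        = ∫ x in U, (indicator (A ∩ {x | 0 < u x}) (fun _ => (1:ℝ)) x -
            indicator (B ∩ {x | 0 < v x}) (fun _ => (1:ℝ)) x) *
          (max (u x - v x) 0 / Real.sqrt ((L n) ^ 2 + (u x - v x) ^ 2)) := rfl
    rw [hEq]
    linarith
  have hdct : Filter.Tendsto
      (fun n => ∫ x in U, c x * (max (w x) 0 / Real.sqrt ((L n)^2 + (w x)^2)))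
      Filter.atTop (nhds (∫ x in U, c x * indicator {x | v x < u x} (fun _ => (1:ℝ)) x)) := by
    apply MeasureTheory.tendsto_integral_of_dominated_convergence (bound := fun _ => (1:ℝ))
    · intro n
      exact (hcm.mul (((gmax_cont (hLpos n)).comp hwc).measurable)).aestronglyMeasurable
    · exact integrable_const 1
    · intro n
      refine Filter.Eventually.of_forall fun x => ?_
      rw [Real.norm_eq_abs, abs_mul]
      have h1 := hc1 x
      have h2 : |max (w x) 0 / Real.sqrt ((L n)^2 + (w x)^2)| ≤ 1 :=
        abs_le.2 ⟨by linarith [gmax_nonneg (l := L n) (w x)], gmax_le_one (hLpos n) (w x)⟩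
      have h3 := abs_nonneg (c x)
      have h4 := abs_nonneg (max (w x) 0 / Real.sqrt ((L n)^2 + (w x)^2))
      nlinarith
    · refine Filter.Eventually.of_forall fun x => ?_
      rcases lt_or_ge 0 (w x) with hx | hx
      · have hmem : x ∈ {x | v x < u x} := by
          simp only [mem_setOf_eq]
          have := hx
          rw [hwdef] at this
          exact sub_pos.mp this
        rw [indicator_of_mem hmem]
        have h2 := gmax_tendsto hx hL0
        have h3 := tendsto_const_nhds (x := c x) (f := Filter.atTop (α := ℕ)) |>.mul h2
        simpa using h3
      · have hnmem : x ∉ {x | v x < u x} := by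
          simp only [mem_setOf_eq, not_lt]
          have := hx
          rw [hwdef] at this
          exact sub_nonpos.mp this
        rw [indicator_of_notMem hnmem]
        have hz : (fun n => c x * (max (w x) 0 / Real.sqrt ((L n)^2 + (w x)^2)))
            = fun _ => (0:ℝ) := by
          funext n
          rw [max_eq_right hx, zero_div, mul_zero]
        rw [hz, mul_zero]
        exact tendsto_const_nhds
  exact le_of_tendsto hdct (Filter.Eventually.of_forall hJneg)
end

section
/- Let F : [0,∞) → [0,∞) be a nondecreasing function satisfying F(R) ≤ K R^{N/2} and F(R) ≤ (K/R) F(2R) for all R > 0 and some constant K > 0. Then F ≡ 0. -/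
open Set

/-- Abstract decay lemma: a nondecreasing `F : [0,∞) → [0,∞)` with
`F(R) ≤ K R^{N/2}` and `F(R) ≤ (K/R) F(2R)` vanishes identically. -/
theorem stmt12 (N : ℕ) (hN : 1 ≤ N) (K : ℝ) (hK : 0 < K) (F : ℝ → ℝ)
    (hmono : MonotoneOn F (Ici 0)) (hpos : ∀ R, 0 ≤ R → 0 ≤ F R)
    (h1 : ∀ R, 0 < R → F R ≤ K * R ^ ((N : ℝ) / 2))
    (h2 : ∀ R, 0 < R → F R ≤ (K / R) * F (2 * R)) :
    ∀ R, 0 ≤ R → F R = 0 := by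
  have claim : ∀ k : ℕ, ∃ C : ℝ, 0 < C ∧
      ∀ R : ℝ, 0 < R → F R ≤ C * R ^ ((N : ℝ) / 2 - k) := by
    intro k
    induction k with
    | zero => exact ⟨K, hK, fun R hR => by simpa using h1 R hR⟩
    | succ k ih =>
      obtain ⟨C, hC0, hC⟩ := ih
      refine ⟨K * C * 2 ^ ((N : ℝ) / 2 - k), by positivity, fun R hR => ?_⟩
      have h2R : (0:ℝ) < 2 * R := by linarith
      calc F R ≤ (K / R) * F (2 * R) := h2 R hR
        _ ≤ (K / R) * (C * (2 * R) ^ ((N : ℝ) / 2 - k)) := by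
            apply mul_le_mul_of_nonneg_left (hC _ h2R) (by positivity)
        _ = K * C * 2 ^ ((N : ℝ) / 2 - k) * (R ^ ((N : ℝ) / 2 - k) / R) := by
            rw [Real.mul_rpow (by norm_num) hR.le]; ring
        _ = K * C * 2 ^ ((N : ℝ) / 2 - k) * R ^ ((N : ℝ) / 2 - (k + 1 : ℕ)) := by
            rw [show ((N : ℝ) / 2 - (k + 1 : ℕ)) = ((N : ℝ) / 2 - k) - 1 by push_cast; ring,
              Real.rpow_sub hR, Real.rpow_sub hR, Real.rpow_sub hR, Real.rpow_one]
  obtain ⟨C, hC0, hC⟩ := claim N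
  have key : ∀ R : ℝ, 0 < R → F R = 0 := by
    intro R hR
    refine le_antisymm ?_ (hpos R hR.le)
    have hexp : (N : ℝ) / 2 - N = -((N : ℝ) / 2) := by ring
    have hNpos : (0:ℝ) < (N : ℝ) / 2 := by
      have : (1:ℝ) ≤ N := by exact_mod_cast hN
      linarith
    have htend : Filter.Tendsto (fun x : ℝ => C * x ^ ((N : ℝ) / 2 - N))
        Filter.atTop (nhds 0) := by
      have := (tendsto_rpow_neg_atTop hNpos).const_mul C
      simpa [hexp] using this
    refine ge_of_tendsto htend ?_
    filter_upwards [Filter.eventually_ge_atTop R, Filter.eventually_gt_atTop 0] with x hx hx0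
    calc F R ≤ F x := hmono hR.le (le_trans hR.le hx) hx
      _ ≤ C * x ^ ((N : ℝ) / 2 - N) := hC x hx0
  intro R hR
  rcases hR.lt_or_eq with h | h
  · exact key R h
  · subst h
    refine le_antisymm ?_ (hpos 0 le_rfl)
    calc F 0 ≤ F 1 := hmono (le_refl (0:ℝ)) (by norm_num) (by norm_num)
      _ = 0 := key 1 one_pos
end
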